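/- If Φ : Mₙ(ℂ) → Mₘ(ℂ) is a strictly positive linear map, then its projective diameter Δ(Φ) = sup{ d_H(Φ(A), Φ(B)) : A, B positive definite } is finite. -/

import Mathlib

open Matrix
open scoped ComplexOrder
open scoped Kronecker BigOperators
noncomputable def dH {n : ℕ} (A B : Matrix (Fin n) (Fin n) ℂ) : ℝ :=
  Real.log (sInf {l : ℝ | ((l : ℂ) • B - A).PosSemidef} /
    sSup {l : ℝ | (A - (l : ℂ) • B).PosSemidef})

attribute [local instance] Matrix.normedAddCommGroup Matrix.normedSpace

private lemma quad_smul_vec {m : ℕ} (N : Matrix (Fin m) (Fin m) ℂ) (c : ℝ) (u : Fin m → ℂ) :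
    star ((c:ℂ) • u) ⬝ᵥ N *ᵥ ((c:ℂ) • u) = ((c^2 : ℝ) : ℂ) * (star u ⬝ᵥ N *ᵥ u) := by
  simp only [star_smul, mulVec_smul, smul_dotProduct, dotProduct_smul, smul_eq_mul,
    RCLike.star_def, Complex.conj_ofReal]
  push_cast
  ring

private lemma quad_smul_mat {m : ℕ} (N : Matrix (Fin m) (Fin m) ℂ) (c : ℂ) (u : Fin m → ℂ) :
    star u ⬝ᵥ (c • N) *ᵥ u = c * (star u ⬝ᵥ N *ᵥ u) := by
  simp [smul_mulVec, dotProduct_smul, smul_eq_mul]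

private lemma quad_sub_smul {m : ℕ} (X Y : Matrix (Fin m) (Fin m) ℂ) (l : ℝ) (x : Fin m → ℂ) :
    star x ⬝ᵥ (((l:ℂ) • Y - X) *ᵥ x) = (l:ℂ) * (star x ⬝ᵥ Y *ᵥ x) - star x ⬝ᵥ X *ᵥ x := by
  simp [sub_mulVec, dotProduct_sub, smul_mulVec, dotProduct_smul, smul_eq_mul]

private lemma quad_sub_smul' {m : ℕ} (X Y : Matrix (Fin m) (Fin m) ℂ) (l : ℝ) (x : Fin m → ℂ) :
    star x ⬝ᵥ ((X - (l:ℂ) • Y) *ᵥ x) = (star x ⬝ᵥ X *ᵥ x) - (l:ℂ) * (star x ⬝ᵥ Y *ᵥ x) := by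
  simp [sub_mulVec, dotProduct_sub, smul_mulVec, dotProduct_smul, smul_eq_mul]

private lemma diag_re_pos {n : ℕ} {X : Matrix (Fin n) (Fin n) ℂ} (hX : X.PosDef) (i : Fin n) :
    0 < (X i i).re := by
  have h := hX.dotProduct_mulVec_pos (x := Pi.single i 1) (by
    intro h0
    have := congrFun h0 i
    simp at this)
  rw [Complex.lt_def] at h
  have h' := h.1
  simpa [mulVec_single, dotProduct, Pi.single_apply, apply_ite, Finset.sum_ite_eq'] using h'

private lemma trace_ofReal {n : ℕ} {X : Matrix (Fin n) (Fin n) ℂ} (hX : X.PosSemidef) :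
    X.trace = ((X.trace.re : ℝ) : ℂ) := by
  have him : ∀ i, (X i i).im = 0 := by
    intro i
    have h : (0:ℂ) ≤ X i i := by
      have := hX.dotProduct_mulVec_nonneg (Pi.single i 1)
      simpa [mulVec_single, dotProduct, Pi.single_apply, apply_ite, Finset.sum_ite_eq'] using this
    rw [Complex.le_def] at h
    exact h.2.symm
  apply Complex.ext
  · simp
  · simp only [Matrix.trace, Complex.ofReal_im, Complex.im_sum]
    exact Finset.sum_eq_zero fun i _ => him i

private lemma trace_re_pos {n : ℕ} (hn : 0 < n) {X : Matrix (Fin n) (Fin n) ℂ} (hX : X.PosDef) :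
    0 < X.trace.re := by
  have h : X.trace.re = ∑ i, (X i i).re := by
    simp only [Matrix.trace, Complex.re_sum]
    rfl
  rw [h]
  exact Finset.sum_pos (fun i _ => diag_re_pos hX i) ⟨⟨0,hn⟩, Finset.mem_univ _⟩

private lemma scaled_psd {n : ℕ} {X : Matrix (Fin n) (Fin n) ℂ} (hX : X.PosDef) (t : ℝ)
    (ht : 0 < t) (htr : X.trace = (t : ℂ)) :
    (((t:ℂ))⁻¹ • X).PosSemidef ∧ (((t:ℂ))⁻¹ • X).trace = 1 ∧ X = (t:ℂ) • (((t:ℂ))⁻¹ • X) := by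
  have htne : (t:ℂ) ≠ 0 := by exact_mod_cast ht.ne'
  refine ⟨.of_dotProduct_mulVec_nonneg ?_ ?_, ?_, ?_⟩
  · show ((t:ℂ)⁻¹ • X)ᴴ = (t:ℂ)⁻¹ • X
    rw [conjTranspose_smul, hX.1.eq]
    congr 1
    rw [star_inv₀, RCLike.star_def, Complex.conj_ofReal]
  · intro x
    rw [show ((t:ℂ)⁻¹ • X) *ᵥ x = (t:ℂ)⁻¹ • (X *ᵥ x) from smul_mulVec _ _ _, dotProduct_smul]
    rw [smul_eq_mul]
    apply mul_nonneg
    · rw [← Complex.ofReal_inv]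
      exact_mod_cast (inv_pos.mpr ht).le
    · exact hX.posSemidef.dotProduct_mulVec_nonneg x
  · rw [Matrix.trace_smul, htr, smul_eq_mul, inv_mul_cancel₀ htne]
  · rw [smul_smul, mul_inv_cancel₀ htne, one_smul]

private lemma ratio_eq {e M a b : ℝ} (he : e ≠ 0) (hM : M ≠ 0) (ha : a ≠ 0) (hb : b ≠ 0) :
    (M*a/(e*b)) / (e*a/(M*b)) = (M*M)/(e*e) := by
  field_simp

private lemma key_bounds (n m : ℕ) (hn : 0 < n) (hm : 0 < m)
    (Φ : Matrix (Fin n) (Fin n) ℂ →ₗ[ℂ] Matrix (Fin m) (Fin m) ℂ)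
    (hΦ : ∀ A : Matrix (Fin n) (Fin n) ℂ, A.PosSemidef → A ≠ 0 → (Φ A).PosDef) :
    ∃ ε M : ℝ, 0 < ε ∧ ε ≤ M ∧ ∀ A : Matrix (Fin n) (Fin n) ℂ, A.PosSemidef → A.trace = 1 →
      ∀ x : Fin m → ℂ,
        ε * ‖x‖ ^ 2 ≤ (star x ⬝ᵥ (Φ A) *ᵥ x).re ∧ (star x ⬝ᵥ (Φ A) *ᵥ x).re ≤ M * ‖x‖ ^ 2 := by
  set D : Set (Matrix (Fin n) (Fin n) ℂ) := {B | (Bᴴ * B).trace = 1} with hD_def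
  set S : Set (Fin m → ℂ) := Metric.sphere 0 1 with hS_def
  set g : (Matrix (Fin n) (Fin n) ℂ) × (Fin m → ℂ) → ℝ :=
    fun p => (star p.2 ⬝ᵥ (Φ (p.1ᴴ * p.1)) *ᵥ p.2).re with hg_def
  have hg : Continuous g := by
    have hΦc : Continuous Φ := Φ.continuous_of_finiteDimensional
    exact Complex.continuous_re.comp
      ((continuous_snd.star).dotProduct
        ((hΦc.comp ((continuous_fst.matrix_conjTranspose).matrix_mul continuous_fst)).matrix_mulVec
          continuous_snd))
  have hD : IsCompact D := by
    apply Metric.isCompact_of_isClosed_isBounded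
    · exact isClosed_eq
        ((continuous_id.matrix_conjTranspose.matrix_mul continuous_id).matrix_trace)
        continuous_const
    · apply Metric.isBounded_closedBall (x := (0 : Matrix (Fin n) (Fin n) ℂ)) (r := 1) |>.subset
      intro B hB
      simp only [hD_def, Set.mem_setOf_eq] at hB
      rw [Metric.mem_closedBall, dist_zero_right, Matrix.norm_le_iff zero_le_one]
      intro i j
      have htr : ∑ k, ∑ l, Complex.normSq (B l k) = 1 := by
        have h : (Bᴴ * B).trace = (↑(∑ k, ∑ l, Complex.normSq (B l k)) : ℂ) := by
          simp only [Matrix.trace, Matrix.diag, Matrix.mul_apply, Matrix.conjTranspose_apply]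
          push_cast
          congr 1; ext k; congr 1; ext l
          rw [RCLike.star_def, ← Complex.normSq_eq_conj_mul_self]
        rw [h] at hB
        exact_mod_cast hB
      have h1 : Complex.normSq (B i j) ≤ 1 := by
        calc Complex.normSq (B i j) ≤ ∑ l, Complex.normSq (B l j) :=
              Finset.single_le_sum (f := fun l => Complex.normSq (B l j))
                (fun k _ => Complex.normSq_nonneg _) (Finset.mem_univ i)
          _ ≤ ∑ k, ∑ l, Complex.normSq (B l k) :=
              Finset.single_le_sum (f := fun k => ∑ l, Complex.normSq (B l k))
                (fun k _ => Finset.sum_nonneg fun l _ => Complex.normSq_nonneg _)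
                (Finset.mem_univ j)
          _ = 1 := htr
      have h2 : ‖B i j‖ ^ 2 = Complex.normSq (B i j) := by
        rw [← Complex.sq_norm]
      nlinarith [norm_nonneg (B i j)]
  have hS : IsCompact S := isCompact_sphere 0 1
  have hDne : D.Nonempty := by
    refine ⟨Matrix.single (⟨0,hn⟩ : Fin n) (⟨0,hn⟩ : Fin n) (1:ℂ), ?_⟩
    simp only [hD_def, Set.mem_setOf_eq, Matrix.trace, Matrix.diag, Matrix.mul_apply,
      Matrix.conjTranspose_apply, Matrix.single, Matrix.of_apply, apply_ite,
      _root_.map_one, _root_.map_zero, ite_and, Finset.sum_ite_eq, Finset.mem_univ, if_true]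
    simp
  have hSne : S.Nonempty := by
    refine ⟨Pi.single (⟨0,hm⟩ : Fin m) 1, ?_⟩
    simp only [hS_def, mem_sphere_iff_norm, sub_zero]
    rw [Pi.norm_single]
    simp
  have hprod : IsCompact (D ×ˢ S) := hD.prod hS
  have hprodne : (D ×ˢ S).Nonempty := hDne.prod hSne
  obtain ⟨pε, hpε, hminOn⟩ := hprod.exists_isMinOn hprodne hg.continuousOn
  obtain ⟨pM, hpM, hmaxOn⟩ := hprod.exists_isMaxOn hprodne hg.continuousOn
  refine ⟨g pε, g pM, ?_, hmaxOn hpε, ?_⟩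
  · have hpsd : (pε.1ᴴ * pε.1).PosSemidef := posSemidef_conjTranspose_mul_self _
    have hne : pε.1ᴴ * pε.1 ≠ 0 := by
      intro h0
      have := hpε.1
      simp only [hD_def, Set.mem_setOf_eq, h0, Matrix.trace_zero] at this
      exact zero_ne_one this
    have hxne : pε.2 ≠ 0 := by
      have := hpε.2
      simp only [hS_def, mem_sphere_iff_norm, sub_zero] at this
      intro h0; rw [h0, norm_zero] at this; exact one_ne_zero this.symm
    have hpos := (hΦ _ hpsd hne).dotProduct_mulVec_pos hxne
    rw [Complex.lt_def] at hpos
    simpa [hg_def] using hpos.1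
  · intro A hA htr x
    by_cases hx : x = 0
    · subst hx; simp [dotProduct]
    · have hxn : (0:ℝ) < ‖x‖ := norm_pos_iff.mpr hx
      set u : Fin m → ℂ := ((‖x‖⁻¹ : ℝ) : ℂ) • x with hu_def
      have hu : ‖u‖ = 1 := by
        rw [hu_def, norm_smul]
        simp [Complex.norm_real, abs_of_pos, inv_pos.mpr hxn, inv_mul_cancel₀ hxn.ne']
      have hx_eq : ((‖x‖ : ℝ) : ℂ) • u = x := by
        rw [hu_def, smul_smul, ← Complex.ofReal_mul, mul_inv_cancel₀ hxn.ne']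
        simp
      obtain ⟨B, hBB⟩ : ∃ B : Matrix (Fin n) (Fin n) ℂ, Bᴴ * B = A := by
        open scoped MatrixOrder in
        obtain ⟨B, hB⟩ := CStarAlgebra.nonneg_iff_eq_star_mul_self.mp hA.nonneg
        exact ⟨B, hB.symm⟩
      have hBD : B ∈ D := by simp only [hD_def, Set.mem_setOf_eq, hBB, htr]
      have huS : u ∈ S := by
        simp only [hS_def, mem_sphere_iff_norm, sub_zero]; exact hu
      have hmem : (B, u) ∈ D ×ˢ S := Set.mk_mem_prod hBD huS
      have hlo : g pε ≤ g (B, u) := hminOn hmem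
      have hhi : g (B, u) ≤ g pM := hmaxOn hmem
      have hgval : g (B, u) = (star u ⬝ᵥ (Φ A) *ᵥ u).re := by
        simp only [hg_def, hBB]
      have hquad : star x ⬝ᵥ (Φ A) *ᵥ x = ((‖x‖^2 : ℝ) : ℂ) * (star u ⬝ᵥ (Φ A) *ᵥ u) := by
        conv_lhs => rw [← hx_eq]
        rw [quad_smul_vec]
      have hre : (star x ⬝ᵥ (Φ A) *ᵥ x).re = ‖x‖^2 * (star u ⬝ᵥ (Φ A) *ᵥ u).re := by
        rw [hquad, Complex.re_ofReal_mul]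
      rw [hre]
      rw [hgval] at hlo hhi
      constructor
      · calc g pε * ‖x‖^2 ≤ (star u ⬝ᵥ (Φ A) *ᵥ u).re * ‖x‖^2 :=
              mul_le_mul_of_nonneg_right hlo (sq_nonneg _)
          _ = ‖x‖^2 * (star u ⬝ᵥ (Φ A) *ᵥ u).re := mul_comm _ _
      · calc ‖x‖^2 * (star u ⬝ᵥ (Φ A) *ᵥ u).re ≤ ‖x‖^2 * g pM :=
              mul_le_mul_of_nonneg_left hhi (sq_nonneg _)
          _ = g pM * ‖x‖^2 := mul_comm _ _

/-- A strictly positive linear map has finite projective diameter. -/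
theorem projective_diameter_finite (n m : ℕ)
    (Φ : Matrix (Fin n) (Fin n) ℂ →ₗ[ℂ] Matrix (Fin m) (Fin m) ℂ)
    (hΦ : ∀ A : Matrix (Fin n) (Fin n) ℂ, A.PosSemidef → A ≠ 0 → (Φ A).PosDef) :
    ∃ C : ℝ, ∀ A B : Matrix (Fin n) (Fin n) ℂ, A.PosDef → B.PosDef →
      dH (Φ A) (Φ B) ≤ C := by
  rcases Nat.eq_zero_or_pos n with hn | hn
  · refine ⟨0, fun A B hA hB => ?_⟩
    subst hn
    have hA0 : A = 0 := by ext i j; exact i.elim0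
    have hB0 : B = 0 := by ext i j; exact i.elim0
    rw [hA0, hB0, map_zero]
    have h1 : {l : ℝ | ((l : ℂ) • (0 : Matrix (Fin m) (Fin m) ℂ) - 0).PosSemidef} = Set.univ :=
      Set.eq_univ_of_forall fun l => by simpa using Matrix.PosSemidef.zero
    have h2 : {l : ℝ | ((0 : Matrix (Fin m) (Fin m) ℂ) - (l : ℂ) • 0).PosSemidef} = Set.univ :=
      Set.eq_univ_of_forall fun l => by simpa using Matrix.PosSemidef.zero
    unfold dH
    rw [h1, h2, Real.sInf_of_not_bddBelow not_bddBelow_univ, Real.sSup_univ]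
    simp
  rcases Nat.eq_zero_or_pos m with hm | hm
  · refine ⟨0, fun A B hA hB => ?_⟩
    subst hm
    have hps : ∀ X : Matrix (Fin 0) (Fin 0) ℂ, X.PosSemidef := by
      intro X
      have hX0 : X = 0 := by ext i j; exact i.elim0
      exact hX0 ▸ Matrix.PosSemidef.zero
    have h1 : {l : ℝ | ((l : ℂ) • (Φ B) - (Φ A)).PosSemidef} = Set.univ :=
      Set.eq_univ_of_forall fun l => hps _
    have h2 : {l : ℝ | ((Φ A) - (l : ℂ) • (Φ B)).PosSemidef} = Set.univ :=
      Set.eq_univ_of_forall fun l => hps _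
    unfold dH
    rw [h1, h2, Real.sInf_of_not_bddBelow not_bddBelow_univ, Real.sSup_univ]
    simp
  obtain ⟨ε, M, hε, hεM, hkey⟩ := key_bounds n m hn hm Φ hΦ
  have hM : 0 < M := hε.trans_le hεM
  refine ⟨Real.log ((M * M) / (ε * ε)), fun A B hA hB => ?_⟩
  have bound : ∀ X : Matrix (Fin n) (Fin n) ℂ, X.PosDef → ∀ x : Fin m → ℂ,
      ε * X.trace.re * ‖x‖^2 ≤ (star x ⬝ᵥ (Φ X) *ᵥ x).re ∧
      (star x ⬝ᵥ (Φ X) *ᵥ x).re ≤ M * X.trace.re * ‖x‖^2 := by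
    intro X hX x
    have ht : 0 < X.trace.re := trace_re_pos hn hX
    have htr : X.trace = ((X.trace.re : ℝ) : ℂ) := trace_ofReal hX.posSemidef
    obtain ⟨hpsd, htr1, hXeq⟩ := scaled_psd hX X.trace.re ht htr
    have hq := hkey _ hpsd htr1 x
    have hφ : Φ X = ((X.trace.re : ℝ) : ℂ) • Φ (((X.trace.re : ℝ) : ℂ)⁻¹ • X) := by
      conv_lhs => rw [hXeq]
      rw [Φ.map_smul]
    have hre : (star x ⬝ᵥ (Φ X) *ᵥ x).re
        = X.trace.re * (star x ⬝ᵥ (Φ (((X.trace.re : ℝ) : ℂ)⁻¹ • X)) *ᵥ x).re := by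
      rw [hφ, quad_smul_mat, Complex.re_ofReal_mul]
    rw [hre]
    constructor
    · nlinarith [hq.1, mul_le_mul_of_nonneg_left hq.1 ht.le]
    · nlinarith [hq.2, mul_le_mul_of_nonneg_left hq.2 ht.le]
  have hAne : A ≠ 0 := by
    intro h0
    have := trace_re_pos hn hA
    rw [h0] at this
    simp at this
  have hBne : B ≠ 0 := by
    intro h0
    have := trace_re_pos hn hB
    rw [h0] at this
    simp at this
  have hA' : (Φ A).PosDef := hΦ A hA.posSemidef hAne
  have hB' : (Φ B).PosDef := hΦ B hB.posSemidef hBne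
  have qAim : ∀ x, (star x ⬝ᵥ (Φ A) *ᵥ x).im = 0 := by
    intro x
    have h := (Complex.le_def.mp (hA'.posSemidef.dotProduct_mulVec_nonneg x)).2
    simpa using h.symm
  have qBim : ∀ x, (star x ⬝ᵥ (Φ B) *ᵥ x).im = 0 := by
    intro x
    have h := (Complex.le_def.mp (hB'.posSemidef.dotProduct_mulVec_nonneg x)).2
    simpa using h.symm
  set a := A.trace.re with ha_def
  set b := B.trace.re with hb_def
  have ha : 0 < a := trace_re_pos hn hA
  have hb : 0 < b := trace_re_pos hn hB
  set x₀ : Fin m → ℂ := Pi.single (⟨0,hm⟩ : Fin m) 1 with hx₀_def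
  have hx₀ : ‖x₀‖ = 1 := by rw [hx₀_def, Pi.norm_single]; simp
  have hbA := bound A hA x₀
  have hbB := bound B hB x₀
  rw [hx₀] at hbA hbB
  simp only [one_pow, mul_one] at hbA hbB
  set Sset := {l : ℝ | ((l : ℂ) • (Φ B) - (Φ A)).PosSemidef} with hSset_def
  set Tset := {l : ℝ | ((Φ A) - (l : ℂ) • (Φ B)).PosSemidef} with hTset_def
  have hl₀S : (M*a/(ε*b)) ∈ Sset := by
    refine .of_dotProduct_mulVec_nonneg ?_ ?_
    · show (((M*a/(ε*b) : ℝ):ℂ) • Φ B - Φ A)ᴴ = _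
      rw [conjTranspose_sub, conjTranspose_smul, hA'.1.eq, hB'.1.eq, RCLike.star_def,
        Complex.conj_ofReal]
    · intro x
      rw [quad_sub_smul, Complex.le_def]
      constructor
      · simp only [Complex.zero_re, Complex.sub_re, Complex.re_ofReal_mul]
        have h1 := (bound A hA x).2
        have h2 := (bound B hB x).1
        have hl₀ : (0:ℝ) ≤ M*a/(ε*b) := by positivity
        have h3 : (M*a/(ε*b)) * (ε*b*‖x‖^2) ≤ (M*a/(ε*b)) * (star x ⬝ᵥ (Φ B) *ᵥ x).re := by
          apply mul_le_mul_of_nonneg_left _ hl₀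
          calc ε*b*‖x‖^2 = ε*B.trace.re*‖x‖^2 := by rw [← hb_def]
            _ ≤ _ := h2
        have heq : (M*a/(ε*b)) * (ε*b*‖x‖^2) = M*a*‖x‖^2 := by
          field_simp
        have h4 : (star x ⬝ᵥ (Φ A) *ᵥ x).re ≤ M*a*‖x‖^2 := by
          calc (star x ⬝ᵥ (Φ A) *ᵥ x).re ≤ M*A.trace.re*‖x‖^2 := h1
            _ = M*a*‖x‖^2 := by rw [← ha_def]
        linarith
      · simp only [Complex.zero_im, Complex.sub_im, Complex.mul_im, Complex.ofReal_re,
          Complex.ofReal_im, qAim x, qBim x]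
        ring
  have hl₁T : (ε*a/(M*b)) ∈ Tset := by
    refine .of_dotProduct_mulVec_nonneg ?_ ?_
    · show (Φ A - ((ε*a/(M*b) : ℝ):ℂ) • Φ B)ᴴ = _
      rw [conjTranspose_sub, conjTranspose_smul, hA'.1.eq, hB'.1.eq, RCLike.star_def,
        Complex.conj_ofReal]
    · intro x
      rw [quad_sub_smul', Complex.le_def]
      constructor
      · simp only [Complex.zero_re, Complex.sub_re, Complex.re_ofReal_mul]
        have h1 := (bound A hA x).1
        have h2 := (bound B hB x).2
        have hl₁ : (0:ℝ) ≤ ε*a/(M*b) := by positivity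
        have h3 : (ε*a/(M*b)) * (star x ⬝ᵥ (Φ B) *ᵥ x).re ≤ (ε*a/(M*b)) * (M*b*‖x‖^2) := by
          apply mul_le_mul_of_nonneg_left _ hl₁
          calc (star x ⬝ᵥ (Φ B) *ᵥ x).re ≤ M*B.trace.re*‖x‖^2 := h2
            _ = M*b*‖x‖^2 := by rw [← hb_def]
        have heq : (ε*a/(M*b)) * (M*b*‖x‖^2) = ε*a*‖x‖^2 := by
          field_simp
        have h4 : ε*a*‖x‖^2 ≤ (star x ⬝ᵥ (Φ A) *ᵥ x).re := by
          calc ε*a*‖x‖^2 = ε*A.trace.re*‖x‖^2 := by rw [← ha_def]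
            _ ≤ _ := h1
        linarith
      · simp only [Complex.zero_im, Complex.sub_im, Complex.mul_im, Complex.ofReal_re,
          Complex.ofReal_im, qAim x, qBim x]
        ring
  have hSlb : ∀ l ∈ Sset, ε*a/(M*b) ≤ l := by
    intro l hl
    have h := hl.dotProduct_mulVec_nonneg x₀
    rw [quad_sub_smul, Complex.le_def] at h
    have hre := h.1
    simp only [Complex.zero_re, Complex.sub_re, Complex.re_ofReal_mul] at hre
    rw [div_le_iff₀ (by positivity)]
    rcases le_or_gt 0 l with hl0 | hl0
    · nlinarith [hbA.1, hbA.2, hbB.1, hbB.2, mul_le_mul_of_nonneg_left hbB.2 hl0]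
    · nlinarith [hbA.1, mul_pos hε ha, mul_pos hε hb,
        mul_neg_of_neg_of_pos hl0 (lt_of_lt_of_le (mul_pos hε hb) hbB.1)]
  have hTub : ∀ l ∈ Tset, l ≤ M*a/(ε*b) := by
    intro l hl
    have h := hl.dotProduct_mulVec_nonneg x₀
    rw [quad_sub_smul', Complex.le_def] at h
    have hre := h.1
    simp only [Complex.zero_re, Complex.sub_re, Complex.re_ofReal_mul] at hre
    rw [le_div_iff₀ (by positivity)]
    rcases le_or_gt 0 l with hl0 | hl0
    · nlinarith [hbA.2, hbB.1, mul_le_mul_of_nonneg_left hbB.1 hl0]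
    · nlinarith [hbA.2, mul_pos hM ha, mul_pos hε hb,
        mul_neg_of_neg_of_pos hl0 (mul_pos hε hb)]
  have hbddS : BddBelow Sset := ⟨ε*a/(M*b), fun l hl => hSlb l hl⟩
  have hbddT : BddAbove Tset := ⟨M*a/(ε*b), fun l hl => hTub l hl⟩
  have hInf_le : sInf Sset ≤ M*a/(ε*b) := csInf_le hbddS hl₀S
  have hle_Inf : ε*a/(M*b) ≤ sInf Sset := le_csInf ⟨_, hl₀S⟩ hSlb
  have hle_Sup : ε*a/(M*b) ≤ sSup Tset := le_csSup hbddT hl₁T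
  have hSup_le : sSup Tset ≤ M*a/(ε*b) := csSup_le ⟨_, hl₁T⟩ hTub
  have hpos : 0 < sInf Sset / sSup Tset :=
    div_pos (lt_of_lt_of_le (by positivity) hle_Inf) (lt_of_lt_of_le (by positivity) hle_Sup)
  have hle : sInf Sset / sSup Tset ≤ (M*a/(ε*b)) / (ε*a/(M*b)) :=
    div_le_div₀ (by positivity) hInf_le (by positivity) hle_Sup
  have heq2 : (M*a/(ε*b)) / (ε*a/(M*b)) = (M*M)/(ε*ε) :=
    ratio_eq hε.ne' hM.ne' ha.ne' hb.ne'
  show Real.log (sInf Sset / sSup Tset) ≤ _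
  exact Real.log_le_log hpos (by rw [← heq2]; exact hle)
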